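/- In Causal-PIBT, every deadlock is eventually resolved: if a set of requesting agents forms a deadlock cycle (each agent's head equals the next agent's tail), then after finitely many fair activations at least one agent in the cycle reverts from requesting to contracted, because priority inheritance propagates the maximal priority and the searched set S around the cycle until some requesting agent detects its head in S of its parent. -/

import Mathlib

/-- Deadlock-recovery of Causal-PIBT, abstractly: `n` requesting agents form a
deadlock cycle (`head i = tail (i+1)`), each agent `i` has a priority `p i`
(pairwise distinct, hence with a unique maximum), a temporal priority `ptmp`
(initially `p`), and a searched set `S i` containing `tail i` and `head i`.
Whenever an agent `i` is activated while its predecessor `i-1` (the agent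
requesting `tail i`) has strictly higher temporal priority, `i` inherits that
priority and the predecessor's searched set (plus `head i`); otherwise nothing
changes, and non-activated agents are unchanged.  Under fairness (every agent is
activated at arbitrarily late times), eventually some agent detects its head in
the searched set of its predecessor — the condition that makes it revert from
requesting to contracted, so the deadlock cannot persist forever. -/
theorem causalPIBT_deadlock_recovery
    {n : ℕ} [NeZero n] {P V : Type*} [LinearOrder P]
    (p : Fin n → P) (hp : Function.Injective p)
    (tail head : Fin n → V)
    (hcycle : ∀ i : Fin n, head i = tail (i + 1))
    (ptmp : ℕ → Fin n → P) (S : ℕ → Fin n → Set V)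
    (act : ℕ → Fin n)
    (hfair : ∀ (i : Fin n) (t : ℕ), ∃ t' ≥ t, act t' = i)
    (hptmp0 : ∀ i, ptmp 0 i = p i)
    (hS0 : ∀ i, tail i ∈ S 0 i ∧ head i ∈ S 0 i)
    (hstep : ∀ (t : ℕ) (i : Fin n), act t = i →
        (ptmp t (i - 1) > ptmp t i →
          ptmp (t + 1) i = ptmp t (i - 1) ∧
          S (t + 1) i = S t (i - 1) ∪ S t i ∪ {head i}) ∧
        (¬ ptmp t (i - 1) > ptmp t i →
          ptmp (t + 1) i = ptmp t i ∧ S (t + 1) i = S t i))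
    (hframe : ∀ (t : ℕ) (i : Fin n), act t ≠ i →
        ptmp (t + 1) i = ptmp t i ∧ S (t + 1) i = S t i) :
    ∃ (t : ℕ) (i : Fin n), head i ∈ S t (i - 1) := by
  haveI : Nonempty (Fin n) := ⟨⟨0, Nat.pos_of_ne_zero (NeZero.ne n)⟩⟩
  obtain ⟨M, hM⟩ := Finite.exists_max p
  -- Invariant A : all temporal priorities are bounded by p M
  have hA : ∀ t i, ptmp t i ≤ p M := by
    intro t
    induction t with
    | zero => intro i; rw [hptmp0]; exact hM i
    | succ t ih =>
      intro i
      by_cases hact : act t = i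
      · by_cases hgt : ptmp t (i - 1) > ptmp t i
        · rw [((hstep t i hact).1 hgt).1]; exact ih _
        · rw [((hstep t i hact).2 hgt).1]; exact ih _
      · rw [(hframe t i hact).1]; exact ih _
  -- once an agent's temporal priority equals p M, it stays so
  have hstay1 : ∀ t i, ptmp t i = p M → ptmp (t + 1) i = p M := by
    intro t i h
    by_cases hact : act t = i
    · by_cases hgt : ptmp t (i - 1) > ptmp t i
      · exact absurd (h ▸ hgt) (not_lt.mpr (hA t (i - 1)))
      · rw [((hstep t i hact).2 hgt).1, h]
    · rw [(hframe t i hact).1, h]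
  have hstay : ∀ t t' i, t ≤ t' → ptmp t i = p M → ptmp t' i = p M := by
    intro t t' i hle h
    induction t', hle using Nat.le_induction with
    | base => exact h
    | succ t' _ ih => exact hstay1 t' i ih
  -- Invariant B : carrying priority p M implies head M is in the searched set
  have hB : ∀ t i, ptmp t i = p M → head M ∈ S t i := by
    intro t
    induction t with
    | zero =>
      intro i h
      rw [hptmp0] at h
      have : i = M := hp h
      subst this
      exact (hS0 i).2
    | succ t ih =>
      intro i h
      by_cases hact : act t = i
      · by_cases hgt : ptmp t (i - 1) > ptmp t i
        · obtain ⟨hpe, hSe⟩ := (hstep t i hact).1 hgt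
          have h1 : ptmp t (i - 1) = p M := by rw [← hpe, h]
          rw [hSe]
          exact Or.inl (Or.inl (ih _ h1))
        · obtain ⟨hpe, hSe⟩ := (hstep t i hact).2 hgt
          rw [hSe]; exact ih _ (by rw [← hpe, h])
      · obtain ⟨hpe, hSe⟩ := hframe t i hact
        rw [hSe]; exact ih _ (by rw [← hpe, h])
  -- the maximal priority propagates around the cycle
  open Fin.NatCast in
  have hprop : ∀ k : ℕ, ∃ t, ptmp t (M + (k : Fin n)) = p M := by
    intro k
    induction k with
    | zero => exact ⟨0, by simpa using hptmp0 M⟩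
    | succ k ih =>
      obtain ⟨tk, htk⟩ := ih
      set j : Fin n := M + ((k + 1 : ℕ) : Fin n) with hj
      have hj1 : j - 1 = M + (k : Fin n) := by
        rw [hj]; push_cast; abel
      obtain ⟨t', ht'le, ht'act⟩ := hfair j tk
      have hpred : ptmp t' (j - 1) = p M := by
        rw [hj1]; exact hstay tk t' _ ht'le htk
      by_cases hgt : ptmp t' (j - 1) > ptmp t' j
      · exact ⟨t' + 1, by rw [((hstep t' j ht'act).1 hgt).1, hpred]⟩
      · refine ⟨t', le_antisymm (hA t' j) ?_⟩
        rw [← hpred]; exact not_lt.mp hgt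
  -- apply it to the predecessor of M
  obtain ⟨t, ht⟩ := hprop ((M - 1 - M).val)
  rw [Fin.cast_val_eq_self, add_sub_cancel] at ht
  exact ⟨t, M, hB t (M - 1) ht⟩
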